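/- arXiv:1705.05557 — 2 statements merged into one kernel-verified Lean document; each statement's English description precedes it below -/
import Mathlib

section
/- If $z \in \mathbb{C}^4$ has at least one zero entry, then $\|z\|_{\mathsf{X}} = |z_1| + |z_2| + |z_3| + |z_4|$. -/
open Complex Real

noncomputable def Xfun (z : Fin 4 → ℂ) (σ : ℝ) : ℝ :=
  ‖z 0 * Complex.exp (σ * Complex.I) + (starRingEnd ℂ) (z 3)‖ +
  ‖z 1 * Complex.exp (σ * Complex.I) + (starRingEnd ℂ) (z 2)‖

noncomputable def Xnorm (z : Fin 4 → ℂ) : ℝ := ⨆ σ : ℝ, Xfun z σ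

noncomputable def phase (z : Fin 4 → ℂ) : ℝ :=
  (Complex.arg (z 0) + Complex.arg (z 3)) - (Complex.arg (z 1) + Complex.arg (z 2))

lemma align (a b : ℂ) : ∃ σ : ℝ, ‖a * Complex.exp (σ * Complex.I) + b‖
    = ‖a‖ + ‖b‖ := by
  refine ⟨b.arg - a.arg, ?_⟩
  have key : a * Complex.exp (((b.arg - a.arg : ℝ) : ℂ) * Complex.I)
      = (‖a‖ : ℂ) * Complex.exp ((b.arg : ℂ) * Complex.I) := by
    calc a * Complex.exp (((b.arg - a.arg : ℝ) : ℂ) * Complex.I)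
        = ((‖a‖ : ℂ) * Complex.exp ((a.arg : ℂ) * Complex.I)) *
            Complex.exp (((b.arg - a.arg : ℝ) : ℂ) * Complex.I) := by
          rw [Complex.norm_mul_exp_arg_mul_I]
      _ = (‖a‖ : ℂ) *
            Complex.exp ((a.arg : ℂ) * Complex.I + ((b.arg - a.arg : ℝ) : ℂ) * Complex.I) := by
          rw [mul_assoc, Complex.exp_add]
      _ = _ := by
          rw [show ((a.arg : ℂ) * Complex.I + ((b.arg - a.arg : ℝ) : ℂ) * Complex.I)
            = (b.arg : ℂ) * Complex.I by push_cast; ring]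
  rw [key]
  set c := Complex.exp ((b.arg : ℂ) * Complex.I) with hcdef
  have hc : ‖c‖ = 1 := Complex.norm_exp_ofReal_mul_I _
  have hb : (‖b‖ : ℂ) * c = b := Complex.norm_mul_exp_arg_mul_I b
  conv_lhs => rw [← hb, ← add_mul]
  rw [norm_mul, hc, mul_one, ← Complex.ofReal_add, Complex.norm_real, Real.norm_eq_abs]
  exact abs_of_nonneg (by positivity)

lemma Xfun_le (z : Fin 4 → ℂ) (σ : ℝ) :
    Xfun z σ ≤ ∑ i : Fin 4, ‖z i‖ := by
  rw [Fin.sum_univ_four]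
  unfold Xfun
  have t1 := norm_add_le (z 0 * Complex.exp (σ * Complex.I)) ((starRingEnd ℂ) (z 3))
  have t2 := norm_add_le (z 1 * Complex.exp (σ * Complex.I)) ((starRingEnd ℂ) (z 2))
  simp only [norm_mul, Complex.norm_exp_ofReal_mul_I, mul_one, Complex.norm_conj] at t1 t2
  linarith

lemma bdd (z : Fin 4 → ℂ) : BddAbove (Set.range (Xfun z)) :=
  ⟨_, fun _ ⟨σ, hσ⟩ => hσ ▸ Xfun_le z σ⟩

theorem stmt_6 (z : Fin 4 → ℂ) (h : ∃ i, z i = 0) :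
    Xnorm z = ∑ i : Fin 4, ‖z i‖ := by
  refine le_antisymm (ciSup_le (Xfun_le z)) ?_
  obtain ⟨i, hi⟩ := h
  fin_cases i
  · have hi' : z 0 = 0 := hi
    obtain ⟨σ, hσ⟩ := align (z 1) ((starRingEnd ℂ) (z 2))
    have : Xfun z σ = ∑ i : Fin 4, ‖z i‖ := by
      unfold Xfun
      rw [hi', Fin.sum_univ_four, hσ]
      simp [Complex.norm_conj, hi']
      ring
    exact this ▸ le_ciSup (bdd z) σ
  · have hi' : z 1 = 0 := hi
    obtain ⟨σ, hσ⟩ := align (z 0) ((starRingEnd ℂ) (z 3))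
    have : Xfun z σ = ∑ i : Fin 4, ‖z i‖ := by
      unfold Xfun
      rw [hi', Fin.sum_univ_four, hσ]
      simp [Complex.norm_conj, hi']
      ring
    exact this ▸ le_ciSup (bdd z) σ
  · have hi' : z 2 = 0 := hi
    obtain ⟨σ, hσ⟩ := align (z 0) ((starRingEnd ℂ) (z 3))
    have : Xfun z σ = ∑ i : Fin 4, ‖z i‖ := by
      unfold Xfun
      rw [hi', Fin.sum_univ_four, hσ]
      simp [Complex.norm_conj, hi']
      ring
    exact this ▸ le_ciSup (bdd z) σ
  · have hi' : z 3 = 0 := hi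
    obtain ⟨σ, hσ⟩ := align (z 1) ((starRingEnd ℂ) (z 2))
    have : Xfun z σ = ∑ i : Fin 4, ‖z i‖ := by
      unfold Xfun
      rw [hi', Fin.sum_univ_four, hσ]
      simp [Complex.norm_conj, hi']
      ring
    exact this ▸ le_ciSup (bdd z) σ
end

section
/- Fix $s_1,s_2,s_3,s_4 > 0$ and define $\beta(\phi) = \|(s_1 e^{i\phi}, s_2, s_3, s_4)\|_{\mathsf{X}}$. Then $\beta$ is strictly decreasing on $[0,\pi]$. -/
open Complex Real

/-- auxiliary square-root expression -/
noncomputable def sq2 (p q t : ℝ) : ℝ := Real.sqrt (p^2 + q^2 + 2*p*q*t)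

lemma abs_aux (r t θ : ℝ) :
    ‖(r:ℂ) * Complex.exp (θ * Complex.I) + (t:ℂ)‖ = sq2 r t (Real.cos θ) := by
  rw [Complex.norm_def, Complex.normSq_apply, sq2]
  have h1 : ((r:ℂ) * Complex.exp (θ * Complex.I) + (t:ℂ)).re = r * Real.cos θ + t := by
    simp [Complex.exp_ofReal_mul_I_re]
  have h2 : ((r:ℂ) * Complex.exp (θ * Complex.I) + (t:ℂ)).im = r * Real.sin θ := by
    simp [Complex.exp_ofReal_mul_I_im]
  rw [h1, h2]
  congr 1
  have := Real.sin_sq_add_cos_sq θ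
  ring_nf
  nlinarith [Real.sin_sq_add_cos_sq θ]

lemma sq2_le (p q t : ℝ) (hp : 0 ≤ p) (hq : 0 ≤ q) (ht : t ≤ 1) : sq2 p q t ≤ p + q := by
  rw [sq2]
  have h : p^2 + q^2 + 2*p*q*t ≤ (p+q)^2 := by nlinarith [sq_nonneg (p+q), mul_nonneg hp hq]
  calc Real.sqrt (p^2 + q^2 + 2*p*q*t) ≤ Real.sqrt ((p+q)^2) := Real.sqrt_le_sqrt h
    _ = p + q := Real.sqrt_sq (by positivity)

lemma sq2_lt (p q : ℝ) (hp : 0 < p) (hq : 0 < q) {t₁ t₂ : ℝ} (h1 : -1 ≤ t₁) (h : t₁ < t₂) :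
    sq2 p q t₁ < sq2 p q t₂ := by
  apply Real.sqrt_lt_sqrt
  · nlinarith [sq_nonneg (p - q), mul_pos hp hq]
  · nlinarith [mul_pos hp hq]

lemma sq2_mono (p q : ℝ) (hp : 0 < p) (hq : 0 < q) {t₁ t₂ : ℝ} (h1 : -1 ≤ t₁) (h : t₁ ≤ t₂) :
    sq2 p q t₁ ≤ sq2 p q t₂ := by
  rcases eq_or_lt_of_le h with rfl | h'
  · exact le_refl _
  · exact (sq2_lt p q hp hq h1 h').le

lemma arccos_antitone : Antitone Real.arccos := by
  intro x y h
  unfold Real.arccos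
  have := Real.monotone_arcsin h
  linarith

/-- subadditivity of arccos ∘ cos -/
lemma arccos_cos_add (x y : ℝ) :
    Real.arccos (Real.cos (x + y)) ≤ Real.arccos (Real.cos x) + Real.arccos (Real.cos y) := by
  set a := Real.arccos (Real.cos x) with ha_def
  set b := Real.arccos (Real.cos y) with hb_def
  have ha0 : 0 ≤ a := Real.arccos_nonneg _
  have hb0 : 0 ≤ b := Real.arccos_nonneg _
  by_cases h : Real.pi ≤ a + b
  · exact le_trans (Real.arccos_le_pi _) h
  · push_neg at h
    have hca : Real.cos a = Real.cos x :=
      Real.cos_arccos (Real.neg_one_le_cos x) (Real.cos_le_one x)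
    have hcb : Real.cos b = Real.cos y :=
      Real.cos_arccos (Real.neg_one_le_cos y) (Real.cos_le_one y)
    have hsa : Real.sin a = |Real.sin x| := by
      rw [ha_def, Real.sin_arccos]
      rw [show (1 : ℝ) - Real.cos x ^ 2 = Real.sin x ^ 2 by nlinarith [Real.sin_sq_add_cos_sq x]]
      exact Real.sqrt_sq_eq_abs _
    have hsb : Real.sin b = |Real.sin y| := by
      rw [hb_def, Real.sin_arccos]
      rw [show (1 : ℝ) - Real.cos y ^ 2 = Real.sin y ^ 2 by nlinarith [Real.sin_sq_add_cos_sq y]]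
      exact Real.sqrt_sq_eq_abs _
    have hcos : Real.cos (a + b) ≤ Real.cos (x + y) := by
      rw [Real.cos_add, Real.cos_add, hca, hcb, hsa, hsb]
      have : Real.sin x * Real.sin y ≤ |Real.sin x| * |Real.sin y| := by
        calc Real.sin x * Real.sin y ≤ |Real.sin x * Real.sin y| := le_abs_self _
          _ = |Real.sin x| * |Real.sin y| := abs_mul _ _
      linarith
    calc Real.arccos (Real.cos (x + y)) ≤ Real.arccos (Real.cos (a + b)) :=
          arccos_antitone hcos
      _ = a + b := Real.arccos_cos (by linarith) h.le

section main

variable (s₁ s₂ s₃ s₄ : ℝ)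

/-- the function inside the sup, in real form -/
noncomputable def gfun (φ σ : ℝ) : ℝ :=
  sq2 s₁ s₄ (Real.cos (φ + σ)) + sq2 s₂ s₃ (Real.cos σ)

lemma Xfun_eq (φ σ : ℝ) :
    Xfun ![(s₁ : ℂ) * Complex.exp (φ * Complex.I), (s₂ : ℂ), (s₃ : ℂ), (s₄ : ℂ)] σ =
    gfun s₁ s₂ s₃ s₄ φ σ := by
  rw [Xfun, gfun]
  have e1 : (s₁ : ℂ) * Complex.exp (φ * Complex.I) * Complex.exp (σ * Complex.I) =
      (s₁ : ℂ) * Complex.exp (((φ + σ : ℝ)) * Complex.I) := by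
    rw [mul_assoc, ← Complex.exp_add]
    push_cast
    ring_nf
  simp only [Matrix.cons_val_zero, Matrix.cons_val_one, Matrix.head_cons,
    Matrix.cons_val_two, Matrix.tail_cons, Matrix.cons_val_three]
  rw [e1, Complex.conj_ofReal, Complex.conj_ofReal, abs_aux, abs_aux]

lemma gfun_bdd (hp : 0 ≤ s₁) (hq : 0 ≤ s₂) (hr : 0 ≤ s₃) (hs : 0 ≤ s₄) (φ σ : ℝ) :
    gfun s₁ s₂ s₃ s₄ φ σ ≤ s₁ + s₄ + (s₂ + s₃) := by
  rw [gfun]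
  have := sq2_le s₁ s₄ _ hp hs (Real.cos_le_one (φ + σ))
  have := sq2_le s₂ s₃ _ hq hr (Real.cos_le_one σ)
  linarith

lemma gfun_continuous (φ : ℝ) : Continuous (gfun s₁ s₂ s₃ s₄ φ) := by
  unfold gfun sq2
  fun_prop

lemma gfun_periodic (φ : ℝ) : Function.Periodic (gfun s₁ s₂ s₃ s₄ φ) (2 * Real.pi) := by
  intro σ
  unfold gfun
  rw [show φ + (σ + 2 * Real.pi) = (φ + σ) + 2 * Real.pi by ring,
    Real.cos_add_two_pi, Real.cos_add_two_pi]

lemma gfun_exists_max (φ : ℝ) : ∃ σ₀, ∀ σ, gfun s₁ s₂ s₃ s₄ φ σ ≤ gfun s₁ s₂ s₃ s₄ φ σ₀ := by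
  obtain ⟨σ₀, _, hmax⟩ := (isCompact_Icc (a := (0:ℝ)) (b := 2 * Real.pi)).exists_isMaxOn
    (Set.nonempty_Icc.2 (by positivity)) ((gfun_continuous s₁ s₂ s₃ s₄ φ).continuousOn)
  refine ⟨σ₀, fun σ => ?_⟩
  obtain ⟨y, hy, hyeq⟩ := (gfun_periodic s₁ s₂ s₃ s₄ φ).exists_mem_Ico₀ (by positivity) σ
  rw [hyeq]
  exact hmax (Set.mem_Icc_of_Ico hy)

end main

theorem stmt_13 (s₁ s₂ s₃ s₄ : ℝ) (h₁ : 0 < s₁) (h₂ : 0 < s₂) (h₃ : 0 < s₃) (h₄ : 0 < s₄) :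
    StrictAntiOn
      (fun φ : ℝ => Xnorm ![(s₁ : ℂ) * Complex.exp (φ * Complex.I), (s₂ : ℂ), (s₃ : ℂ), (s₄ : ℂ)])
      (Set.Icc 0 Real.pi) := by
  intro φ' hφ' φ hφ hlt
  simp only
  have hXeq : ∀ ψ : ℝ, Xnorm ![(s₁ : ℂ) * Complex.exp (ψ * Complex.I), (s₂ : ℂ), (s₃ : ℂ), (s₄ : ℂ)]
      = ⨆ σ : ℝ, gfun s₁ s₂ s₃ s₄ ψ σ := by
    intro ψ
    rw [Xnorm]
    exact iSup_congr (Xfun_eq s₁ s₂ s₃ s₄ ψ)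
  rw [hXeq, hXeq]
  -- maximizer for φ
  obtain ⟨σ₀, hσ₀⟩ := gfun_exists_max s₁ s₂ s₃ s₄ φ
  have hub : (⨆ σ : ℝ, gfun s₁ s₂ s₃ s₄ φ σ) ≤ gfun s₁ s₂ s₃ s₄ φ σ₀ := ciSup_le hσ₀
  -- set up a, c
  set a := Real.arccos (Real.cos (φ + σ₀)) with ha_def
  set c := Real.arccos (Real.cos σ₀) with hc_def
  have ha0 : 0 ≤ a := Real.arccos_nonneg _
  have hc0 : 0 ≤ c := Real.arccos_nonneg _
  have haπ : a ≤ Real.pi := Real.arccos_le_pi _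
  have hcπ : c ≤ Real.pi := Real.arccos_le_pi _
  have hgval : gfun s₁ s₂ s₃ s₄ φ σ₀ = sq2 s₁ s₄ (Real.cos a) + sq2 s₂ s₃ (Real.cos c) := by
    rw [gfun, ha_def, hc_def,
      Real.cos_arccos (Real.neg_one_le_cos _) (Real.cos_le_one _),
      Real.cos_arccos (Real.neg_one_le_cos _) (Real.cos_le_one _)]
  have hsum : φ ≤ a + c := by
    have h := arccos_cos_add (φ + σ₀) (-σ₀)
    rw [show φ + σ₀ + -σ₀ = φ by ring, Real.arccos_cos hφ.1 hφ.2, Real.cos_neg] at h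
    exact h
  -- the shrunk pair
  set a' := min a φ' with ha'_def
  set c' := φ' - a' with hc'_def
  have ha'0 : 0 ≤ a' := le_min ha0 hφ'.1
  have ha'a : a' ≤ a := min_le_left _ _
  have ha'π : a' ≤ Real.pi := le_trans (min_le_right _ _) hφ'.2
  have hc'0 : 0 ≤ c' := by rw [hc'_def]; have := min_le_right a φ'; linarith
  have hc'c : c' ≤ c := by
    rcases le_total a φ' with h | h
    · have : a' = a := min_eq_left h
      rw [hc'_def, this]; linarith
    · have : a' = φ' := min_eq_right h
      rw [hc'_def, this]; simp [hc0]
  have hc'π : c' ≤ Real.pi := by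
    have : c' ≤ φ' := by rw [hc'_def]; linarith
    linarith [hφ'.2]
  have hsum' : a' + c' = φ' := by rw [hc'_def]; ring
  -- strict inequality: F a' c' > F a c
  have hstrict : sq2 s₁ s₄ (Real.cos a) + sq2 s₂ s₃ (Real.cos c) <
      sq2 s₁ s₄ (Real.cos a') + sq2 s₂ s₃ (Real.cos c') := by
    have hne : a' < a ∨ c' < c := by
      by_contra hcon
      push_neg at hcon
      have ea : a' = a := le_antisymm ha'a hcon.1
      have ec : c' = c := le_antisymm hc'c hcon.2
      rw [ea, ec] at hsum'
      linarith
    have hmono1 : sq2 s₁ s₄ (Real.cos a) ≤ sq2 s₁ s₄ (Real.cos a') :=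
      sq2_mono s₁ s₄ h₁ h₄ (Real.neg_one_le_cos _)
        (Real.cos_le_cos_of_nonneg_of_le_pi ha'0 haπ ha'a)
    have hmono2 : sq2 s₂ s₃ (Real.cos c) ≤ sq2 s₂ s₃ (Real.cos c') :=
      sq2_mono s₂ s₃ h₂ h₃ (Real.neg_one_le_cos _)
        (Real.cos_le_cos_of_nonneg_of_le_pi hc'0 hcπ hc'c)
    rcases hne with h | h
    · have : sq2 s₁ s₄ (Real.cos a) < sq2 s₁ s₄ (Real.cos a') :=
        sq2_lt s₁ s₄ h₁ h₄ (Real.neg_one_le_cos _)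
          (Real.cos_lt_cos_of_nonneg_of_le_pi ha'0 haπ h)
      linarith
    · have : sq2 s₂ s₃ (Real.cos c) < sq2 s₂ s₃ (Real.cos c') :=
        sq2_lt s₂ s₃ h₂ h₃ (Real.neg_one_le_cos _)
          (Real.cos_lt_cos_of_nonneg_of_le_pi hc'0 hcπ h)
      linarith
  -- realize F a' c' as gfun φ' (-c')
  have hreal : gfun s₁ s₂ s₃ s₄ φ' (-c') = sq2 s₁ s₄ (Real.cos a') + sq2 s₂ s₃ (Real.cos c') := by
    rw [gfun, show φ' + -c' = a' by linarith, Real.cos_neg]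
  have hbdd : BddAbove (Set.range (gfun s₁ s₂ s₃ s₄ φ')) := by
    refine ⟨s₁ + s₄ + (s₂ + s₃), ?_⟩
    rintro x ⟨σ, rfl⟩
    exact gfun_bdd s₁ s₂ s₃ s₄ h₁.le h₂.le h₃.le h₄.le φ' σ
  have hlb : gfun s₁ s₂ s₃ s₄ φ' (-c') ≤ ⨆ σ : ℝ, gfun s₁ s₂ s₃ s₄ φ' σ :=
    le_ciSup hbdd _
  calc (⨆ σ : ℝ, gfun s₁ s₂ s₃ s₄ φ σ) ≤ gfun s₁ s₂ s₃ s₄ φ σ₀ := hub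
    _ = sq2 s₁ s₄ (Real.cos a) + sq2 s₂ s₃ (Real.cos c) := hgval
    _ < sq2 s₁ s₄ (Real.cos a') + sq2 s₂ s₃ (Real.cos c') := hstrict
    _ = gfun s₁ s₂ s₃ s₄ φ' (-c') := hreal.symm
    _ ≤ _ := hlb
end
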